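/- Let a = (a_1,…,a_r) be a sequence of positive integers, r ≥ 1, and let D be a common multiple of a_1,…,a_r. Then for every nonnegative integer n, p_a(n) = (1/(r−1)!) · Σ_{(j_1,…,j_r)} ∏_{ℓ=1}^{r−1} ( (n − a_1 j_1 − ⋯ − a_r j_r)/D + ℓ ), where the sum ranges over all tuples (j_1,…,j_r) with 0 ≤ j_i ≤ D/a_i − 1 for 1 ≤ i ≤ r and a_1 j_1 + ⋯ + a_r j_r ≡ n (mod D). -/

import Mathlib

open Finset

/-- The plane partition diamond condition of length `k` on `a : Fin (3k+1) → ℕ`,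
where `a i` (0-indexed) corresponds to `a_{i+1}` (1-indexed). -/
def IsDiamond (k : ℕ) (a : Fin (3 * k + 1) → ℕ) : Prop :=
  ∀ i : ℕ, ∀ _ : i < k,
    a ⟨3 * i + 1, by omega⟩ ≤ a ⟨3 * i, by omega⟩ ∧
    a ⟨3 * i + 2, by omega⟩ ≤ a ⟨3 * i, by omega⟩ ∧
    a ⟨3 * i + 3, by omega⟩ ≤ a ⟨3 * i + 1, by omega⟩ ∧
    a ⟨3 * i + 3, by omega⟩ ≤ a ⟨3 * i + 2, by omega⟩

/-- `ppD k n`: the number of plane partition diamonds of length `k` of `n`. -/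
noncomputable def ppD (k n : ℕ) : ℕ :=
  Nat.card {a : Fin (3 * k + 1) → ℕ // IsDiamond k a ∧ ∑ i, a i = n}

/-- The restricted partition function `p_a(n)` for a sequence `a = (a_1, …, a_r)`. -/
noncomputable def rp {r : ℕ} (a : Fin r → ℕ) (n : ℕ) : ℕ :=
  Nat.card {x : Fin r → ℕ // ∑ i, a i * x i = n}

/-- The sequence `a[k]`, 0-indexed: `seqA k i = a[k]_{i+1}`. -/
def seqA (k : ℕ) : Fin (3 * k + 1) → ℕ := fun i =>
  if ((i : ℕ) + 1) % 6 = 4 then ((i : ℕ) + 1) / 2 else (i : ℕ) + 1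

/-- `α_k = ⌊(k+1)/2⌋`. -/
def alphaK (k : ℕ) : ℕ := (k + 1) / 2

/-- `m_J = ∑_{i ∈ J} (3i − 1)`. -/
def mJ (J : Finset ℕ) : ℕ := ∑ i ∈ J, (3 * i - 1)

/-- `A_k = {1 ≤ j ≤ 3k+1 : j ≢ 4 (mod 6)}`. -/
def setA (k : ℕ) : Finset ℕ := (Finset.Icc 1 (3 * k + 1)).filter (fun j => j % 6 ≠ 4)

/-- `D[k] = lcm A_k`. -/
def DK (k : ℕ) : ℕ := (setA k).lcm id

/-- `β_k = 5α_k − 2` if `k` is odd, `β_k = 5α_k + 1` if `k` is even. -/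
def betaK (k : ℕ) : ℕ := if k % 2 = 1 then 5 * alphaK k - 2 else 5 * alphaK k + 1

/-- `φ_k(j) = j + ⌈(j−3)/5⌉` (the value is a nonnegative integer for `j ≥ 1`). -/
def phiK (j : ℕ) : ℕ := ((j : ℤ) + ⌈((j : ℚ) - 3) / 5⌉).toNat

/-- `ψ_k(j) = j − ⌈(j−3)/6⌉` (the value is a nonnegative integer for `j ≥ 1`). -/
def psiK (j : ℕ) : ℕ := ((j : ℤ) - ⌈((j : ℚ) - 3) / 6⌉).toNat

/-- `B'_k = {j ∈ B_k : j ≡ 2 or 4 (mod 5), j ≤ φ_k⁻¹(3α_k − 1)}`. -/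
def setB' (k : ℕ) : Finset ℕ :=
  (Finset.Icc 1 (betaK k)).filter
    (fun j => (j % 5 = 2 ∨ j % 5 = 4) ∧ j ≤ psiK (3 * alphaK k - 1))

/-- `ε_k(j) = 2` if `j ∈ B'_k`, else `1`. -/
def epsK (k j : ℕ) : ℕ := if j ∈ setB' k then 2 else 1

/-- `s_k(t_1, …, t_{β_k}) = ∏_{j ∈ B'_k} (1 + min{t_j, 2(D[k]/φ_k(j) − 1) − t_j})`. -/
def sK (k : ℕ) (t : ℕ → ℕ) : ℕ :=
  ∏ j ∈ setB' k, (1 + min (t j) (2 * (DK k / phiK j - 1) - t j))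

/-- Turn a `Fin β`-indexed tuple into a 1-indexed family: `tOf t j = t_j` for `1 ≤ j ≤ β`. -/
def tOf {β : ℕ} (t : Fin β → ℕ) : ℕ → ℕ := fun j =>
  if h : 1 ≤ j ∧ j ≤ β then t ⟨j - 1, by omega⟩ else 0

/-- Unsigned Stirling numbers of the first kind: `x(x+1)⋯(x+r−1) = ∑_k stirling1 r k * x^k`. -/
def stirling1 : ℕ → ℕ → ℕ
  | 0, 0 => 1
  | 0, _ + 1 => 0
  | _ + 1, 0 => 0
  | n + 1, m + 1 => stirling1 n m + n * stirling1 n (m + 1)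


lemma natCard_sum_eq (r m : ℕ) :
    Nat.card {q : Fin r → ℕ // ∑ i, q i = m} = Nat.multichoose r m := by
  have e : {q : Fin r → ℕ // ∑ i, q i = m} ≃
      {s : Multiset (Fin r) // Multiset.card s = m} := by
    refine Equiv.subtypeEquiv
      (Finsupp.equivFunOnFinite.symm.trans (Multiset.toFinsupp (α := Fin r)).symm.toEquiv) ?_
    intro q
    simp [Multiset.toFinsupp_symm_apply, Finsupp.card_toMultiset,
      Finsupp.sum_fintype, Finsupp.equivFunOnFinite]
    exact Iff.rfl
  rw [Nat.card_congr e]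
  have : Nat.card {s : Multiset (Fin r) // Multiset.card s = m} = Nat.card (Sym (Fin r) m) := rfl
  rw [this, Nat.card_eq_fintype_card, Sym.card_sym_eq_multichoose, Fintype.card_fin]

lemma natCard_subtype_finset {α : Type*} (s : Finset α) (p : α → Prop) [DecidablePred p]
    (h : ∀ x, p x → x ∈ s) : Nat.card {x // p x} = (s.filter p).card := by
  rw [Nat.card_congr (Equiv.subtypeEquivRight (q := fun x => x ∈ s.filter p)
    (fun x => by simp [Finset.mem_filter]; tauto))]
  rw [Nat.card_eq_fintype_card, Fintype.card_coe]

lemma count_lemma (r : ℕ) (a : Fin r → ℕ) (ha : ∀ i, 0 < a i)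
    (D : ℕ) (hD0 : 0 < D) (hD : ∀ i, a i ∣ D) (n : ℕ) :
    Nat.card {x : Fin r → ℕ // ∑ i, a i * x i = n} =
    ∑ t ∈ ((Fintype.piFinset fun i => Finset.range (D / a i)).filter
        (fun t => (∑ i, a i * t i) % D = n % D ∧ ∑ i, a i * t i ≤ n)),
      Nat.multichoose r ((n - ∑ i, a i * t i) / D) := by
  have hb : ∀ i, 0 < D / a i := fun i => Nat.div_pos (Nat.le_of_dvd hD0 (hD i)) (ha i)
  have hab : ∀ i, a i * (D / a i) = D := fun i => Nat.mul_div_cancel' (hD i)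
  have hsplit : ∀ x : Fin r → ℕ,
      ∑ i, a i * x i = D * (∑ i, x i / (D / a i)) + ∑ i, a i * (x i % (D / a i)) := by
    intro x
    rw [Finset.mul_sum, ← Finset.sum_add_distrib]
    refine Finset.sum_congr rfl fun i _ => ?_
    conv_lhs => rw [← Nat.div_add_mod (x i) (D / a i)]
    rw [Nat.mul_add, ← Nat.mul_assoc, hab i]
  rw [natCard_subtype_finset (Fintype.piFinset fun _ => Finset.range (n + 1)) _
    (fun x hx => by
      simp only [Fintype.mem_piFinset, Finset.mem_range]
      intro i
      have h1 : a i * x i ≤ n := hx ▸ Finset.single_le_sum (f := fun i => a i * x i)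
        (fun _ _ => Nat.zero_le _) (Finset.mem_univ i)
      have := Nat.le_mul_of_pos_left (x i) (ha i)
      omega)]
  rw [Finset.card_eq_sum_card_fiberwise
    (f := fun x => fun i => x i % (D / a i))
    (t := (Fintype.piFinset fun i => Finset.range (D / a i)).filter
        (fun t => (∑ i, a i * t i) % D = n % D ∧ ∑ i, a i * t i ≤ n))
    (fun x hx => by
      simp only [Finset.mem_coe, Finset.mem_filter, Fintype.mem_piFinset, Finset.mem_range] at hx ⊢
      obtain ⟨-, hx⟩ := hx
      have hs := hsplit x
      refine ⟨fun i => Nat.mod_lt _ (hb i), ?_, ?_⟩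
      · rw [← hx, hs, Nat.mul_add_mod]
      · omega)]
  refine Finset.sum_congr rfl fun t ht => ?_
  simp only [Finset.mem_filter, Fintype.mem_piFinset, Finset.mem_range] at ht
  obtain ⟨htlt, hmod, hle⟩ := ht
  set S := ∑ i, a i * t i with hS
  set m := (n - S) / D with hm
  clear_value m
  clear_value S
  have hdvd : D ∣ n - S := by
    have h4 := (Nat.modEq_iff_dvd (n := D) (a := S) (b := n)).mp hmod
    zify [hle]
    exact h4
  have hDm : D * m = n - S := by rw [hm, Nat.mul_div_cancel' hdvd]
  have hcount : Nat.card {q : Fin r → ℕ // ∑ i, q i = m} =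
      ((Fintype.piFinset fun _ : Fin r => Finset.range (m + 1)).filter
        (fun q => ∑ i, q i = m)).card :=
    natCard_subtype_finset _ _ (fun q hq => by
      simp only [Fintype.mem_piFinset, Finset.mem_range]
      intro i
      have : q i ≤ m := hq ▸ Finset.single_le_sum (f := fun i => q i)
        (fun _ _ => Nat.zero_le _) (Finset.mem_univ i)
      omega)
  rw [← natCard_sum_eq r m, hcount]
  refine Finset.card_bij' (i := fun x _ => fun i => x i / (D / a i))
    (j := fun q _ => fun i => t i + (D / a i) * q i) ?_ ?_ ?_ ?_
  · -- maps into Q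
    intro x hx
    simp only [Finset.mem_filter, Fintype.mem_piFinset, Finset.mem_range] at hx ⊢
    obtain ⟨⟨-, hxn⟩, hxt⟩ := hx
    have hs := hsplit x
    have hfun : ∀ i, x i % (D / a i) = t i := fun i => congrFun hxt i
    have hSx : ∑ i, a i * (x i % (D / a i)) = S := by
      rw [hS]; exact Finset.sum_congr rfl fun i _ => by rw [hfun i]
    have hsum : ∑ i, x i / (D / a i) = m := by
      rw [hSx, hxn] at hs
      have h5 : n - S = D * (∑ i, x i / (D / a i)) := Nat.sub_eq_of_eq_add hs
      rw [hm, h5, Nat.mul_div_cancel_left _ hD0]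
    refine ⟨fun i => ?_, hsum⟩
    have : x i / (D / a i) ≤ m := hsum ▸ Finset.single_le_sum
      (f := fun i => x i / (D / a i)) (fun _ _ => Nat.zero_le _) (Finset.mem_univ i)
    exact Nat.lt_succ_of_le this
  · -- maps back into fiber
    intro q hq
    simp only [Finset.mem_filter, Fintype.mem_piFinset, Finset.mem_range] at hq ⊢
    obtain ⟨-, hqm⟩ := hq
    have hsumn : ∑ i, a i * (t i + D / a i * q i) = n := by
      have : ∀ i, a i * (t i + D / a i * q i) = a i * t i + D * q i := fun i => by
        rw [Nat.mul_add, ← Nat.mul_assoc, hab i]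
      rw [Finset.sum_congr rfl fun i _ => this i, Finset.sum_add_distrib,
        ← Finset.mul_sum, hqm, hDm]
      rw [← hS]
      exact Nat.add_sub_cancel' hle
    refine ⟨⟨fun i => ?_, hsumn⟩, ?_⟩
    · have h1 : a i * (t i + D / a i * q i) ≤ n := hsumn ▸ Finset.single_le_sum
        (f := fun i => a i * (t i + D / a i * q i)) (fun _ _ => Nat.zero_le _)
        (Finset.mem_univ i)
      have := Nat.le_mul_of_pos_left (t i + D / a i * q i) (ha i)
      exact Nat.lt_succ_of_le (le_trans this h1)
    · funext i
      rw [Nat.add_mul_mod_self_left, Nat.mod_eq_of_lt (htlt i)]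
  · -- left inverse
    intro x hx
    simp only [Finset.mem_filter] at hx
    have hxt := hx.2
    funext i
    show t i + D / a i * (x i / (D / a i)) = x i
    rw [← congrFun hxt i, Nat.mod_add_div]
  · -- right inverse
    intro q hq
    funext i
    show (t i + D / a i * q i) / (D / a i) = q i
    rw [Nat.add_mul_div_left _ _ (hb i), Nat.div_eq_of_lt (htlt i), Nat.zero_add]

lemma ascFactorial_prod (m k : ℕ) : ∏ l ∈ Finset.Icc 1 k, (m + l) = (m + 1).ascFactorial k := by
  induction k with
  | zero => simp
  | succ k ih =>
    rw [Finset.prod_Icc_succ_top (by omega), ih, Nat.ascFactorial_succ]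
    ring

lemma fac_mul_multichoose (m k : ℕ) :
    k.factorial * Nat.multichoose (k + 1) m = (m + 1).ascFactorial k := by
  have h1 := Nat.factorial_mul_ascFactorial m k
  have h2 := Nat.choose_mul_factorial_mul_factorial (show k ≤ m + k by omega)
  rw [Nat.multichoose_eq]
  have : (k + 1 + m - 1) = m + k := by omega
  rw [this]
  have h3 : (m + k).choose m = (m + k).choose k := by
    rw [← Nat.choose_symm (by omega : k ≤ m + k)]
    congr 1
    omega
  apply Nat.eq_of_mul_eq_mul_left (Nat.factorial_pos m)
  rw [h1, ← h2, Nat.add_sub_cancel, h3]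
  ring


/-- the concise formula for the restricted partition function `p_a(n)`. -/
theorem stmt13 (r : ℕ) (hr : 1 ≤ r) (a : Fin r → ℕ) (ha : ∀ i, 0 < a i)
    (D : ℕ) (hD0 : 0 < D) (hD : ∀ i, a i ∣ D) (n : ℕ) :
    (rp a n : ℚ) = (1 / (Nat.factorial (r - 1) : ℚ)) *
      ∑ t ∈ (Fintype.piFinset fun i => Finset.range (D / a i)).filter
          (fun t => (∑ i, a i * t i) % D = n % D),
        ∏ l ∈ Finset.Icc 1 (r - 1),
          (((n : ℚ) - ((∑ i, a i * t i : ℕ) : ℚ)) / (D : ℚ) + (l : ℚ)) := by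
  classical
  have hDQ : (D : ℚ) ≠ 0 := Nat.cast_ne_zero.mpr (by omega)
  -- terms with sum > n vanish
  have hzero : ∀ t ∈ (Fintype.piFinset fun i => Finset.range (D / a i)).filter
      (fun t => (∑ i, a i * t i) % D = n % D),
      (∏ l ∈ Finset.Icc 1 (r - 1),
        (((n : ℚ) - ((∑ i, a i * t i : ℕ) : ℚ)) / (D : ℚ) + (l : ℚ))) ≠ 0 →
      ∑ i, a i * t i ≤ n := by
    intro t ht hne
    by_contra hgt
    apply hne
    simp only [Finset.mem_filter, Fintype.mem_piFinset, Finset.mem_range] at ht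
    obtain ⟨htlt, hmod⟩ := ht
    set S := ∑ i, a i * t i with hS
    have hn : n < S := by omega
    have hSlt : S < r * D := by
      have : ∀ i, a i * t i ≤ D - 1 := fun i => by
        have h1 : a i * t i ≤ a i * (D / a i - 1) :=
          Nat.mul_le_mul_left _ (by have := htlt i; omega)
        have h2 : a i * (D / a i) = D := Nat.mul_div_cancel' (hD i)
        have h3 : a i * (D / a i - 1) = D - a i := by
          rw [Nat.mul_sub, h2, Nat.mul_one]
        have := ha i
        omega
      calc S ≤ ∑ _i : Fin r, (D - 1) := Finset.sum_le_sum fun i _ => this i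
        _ = r * (D - 1) := by rw [Finset.sum_const, Finset.card_univ, Fintype.card_fin]; ring
        _ < r * D := by
          have h1 : r * (D - 1) = r * D - r := by rw [Nat.mul_sub, Nat.mul_one]
          have h2 : r ≤ r * D := Nat.le_mul_of_pos_right r hD0
          omega
    have hdvd : D ∣ S - n := by
      have h4 := (Nat.modEq_iff_dvd (n := D) (a := n) (b := S)).mp hmod.symm
      zify [le_of_lt hn]
      exact h4
    set j := (S - n) / D with hj
    have hDj : D * j = S - n := Nat.mul_div_cancel' hdvd
    have hj1 : 1 ≤ j := by
      rcases Nat.eq_zero_or_pos j with h | h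
      · rw [h, Nat.mul_zero] at hDj; omega
      · exact h
    have hjr : j ≤ r - 1 := by
      have : D * j < r * D := by omega
      have : j < r := by
        rw [Nat.mul_comm] at this
        exact Nat.lt_of_mul_lt_mul_right this
      omega
    apply Finset.prod_eq_zero (Finset.mem_Icc.mpr ⟨hj1, hjr⟩)
    have hcast : ((S : ℚ)) - n = D * j := by
      have := congrArg (Nat.cast (R := ℚ)) hDj
      push_cast [Nat.cast_sub (le_of_lt hn)] at this
      linarith
    field_simp
    linarith
  rw [← Finset.sum_filter_of_ne hzero]
  show (rp a n : ℚ) = _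
  rw [rp, count_lemma r a ha D hD0 hD n, ← Finset.filter_filter]
  rw [Nat.cast_sum, Finset.mul_sum]
  refine Finset.sum_congr rfl fun t ht => ?_
  simp only [Finset.mem_filter, Fintype.mem_piFinset, Finset.mem_range] at ht
  obtain ⟨⟨-, hmod⟩, hle⟩ := ht
  set S := ∑ i, a i * t i with hS
  set m := (n - S) / D with hm
  have hdvd : D ∣ n - S := by
    have h4 := (Nat.modEq_iff_dvd (n := D) (a := S) (b := n)).mp hmod
    zify [hle]
    exact h4
  have hDm : D * m = n - S := Nat.mul_div_cancel' hdvd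
  have hmQ : ((n : ℚ) - S) / D = m := by
    have := congrArg (Nat.cast (R := ℚ)) hDm
    push_cast [Nat.cast_sub hle] at this
    field_simp
    linarith
  rw [hmQ]
  have hprod : ∏ l ∈ Finset.Icc 1 (r - 1), ((m : ℚ) + l) =
      (((m + 1).ascFactorial (r - 1) : ℕ) : ℚ) := by
    rw [← ascFactorial_prod m (r - 1)]
    push_cast
    rfl
  rw [hprod, ← fac_mul_multichoose m (r - 1)]
  have hrr : r - 1 + 1 = r := by omega
  rw [hrr]
  push_cast
  rw [one_div]
  field_simp
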